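/- Fix a real number q > 0 with q ≠ 1 and a half-integer j ≥ 0. On the spin-j representation of U_q(su(2)), the quantum squared norm of the vector operator t equals a multiple of the identity: Σ_{m = −1,0,1} (−1)^{1−m} q^{m/2} t_m t_{−m} = −([2j][2j+2]/[2]) · Id, i.e. −q^{1/2} t₁ t₋₁ − t₀² − q^{−1/2} t₋₁ t₁ = −([2j][2j+2]/[2]) · Id. -/

import Mathlib

/-! STATEMENT 11: the quantum squared norm of the vector operator t on the spin-j representation. -/

noncomputable section

/-- The q-number [x] = (q^{x/2} − q^{−x/2})/(q^{1/2} − q^{−1/2}). -/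
def qnum (q x : ℝ) : ℝ :=
  (q ^ (x / 2) - q ^ (-x / 2)) / (q ^ ((1 : ℝ) / 2) - q ^ (-(1 : ℝ) / 2))

/-- The magnetic number m = i − j attached to the basis index i, where j = n/2. -/
def mval (n : ℕ) (i : Fin (n + 1)) : ℝ := ((i : ℕ) : ℝ) - (n : ℝ) / 2

/-- The operator K of the spin-(n/2) representation. -/
def Kmat (q : ℝ) (n : ℕ) : Matrix (Fin (n + 1)) (Fin (n + 1)) ℝ :=
  Matrix.diagonal fun i => q ^ (mval n i / 2)

/-- The operator K⁻¹ of the spin-(n/2) representation. -/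
def Kinvmat (q : ℝ) (n : ℕ) : Matrix (Fin (n + 1)) (Fin (n + 1)) ℝ :=
  Matrix.diagonal fun i => q ^ (-(mval n i) / 2)

/-- The raising operator J₊ of the spin-(n/2) representation:
J₊ e_m = √([j−m][j+m+1]) e_{m+1}. -/
def Jpmat (q : ℝ) (n : ℕ) : Matrix (Fin (n + 1)) (Fin (n + 1)) ℝ :=
  Matrix.of fun i i' =>
    if (i : ℕ) = (i' : ℕ) + 1 then
      Real.sqrt (qnum q ((n : ℝ) - ((i' : ℕ) : ℝ)) * qnum q (((i' : ℕ) : ℝ) + 1))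
    else 0

/-- The lowering operator J₋ of the spin-(n/2) representation:
J₋ e_m = √([j+m][j−m+1]) e_{m−1}. -/
def Jmmat (q : ℝ) (n : ℕ) : Matrix (Fin (n + 1)) (Fin (n + 1)) ℝ :=
  Matrix.of fun i i' =>
    if (i : ℕ) + 1 = (i' : ℕ) then
      Real.sqrt (qnum q (((i' : ℕ) : ℝ)) * qnum q ((n : ℝ) - ((i' : ℕ) : ℝ) + 1))
    else 0

/-- The component t₁ = K J₊ of the vector operator t. -/
def tOne (q : ℝ) (n : ℕ) : Matrix (Fin (n + 1)) (Fin (n + 1)) ℝ :=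
  Kmat q n * Jpmat q n

/-- The component t₀ = −(q^{−1/2} J₊J₋ − q^{1/2} J₋J₊)/√[2] of the vector operator t. -/
def tZero (q : ℝ) (n : ℕ) : Matrix (Fin (n + 1)) (Fin (n + 1)) ℝ :=
  -((Real.sqrt (qnum q 2))⁻¹ •
    (q ^ (-(1 : ℝ) / 2) • (Jpmat q n * Jmmat q n) - q ^ ((1 : ℝ) / 2) • (Jmmat q n * Jpmat q n)))

/-- The component t₋₁ = −K J₋ of the vector operator t. -/
def tNegOne (q : ℝ) (n : ℕ) : Matrix (Fin (n + 1)) (Fin (n + 1)) ℝ :=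
  -(Kmat q n * Jmmat q n)


namespace T11

lemma qnum_zero (q : ℝ) : qnum q 0 = 0 := by
  simp [qnum]

lemma qnum_nonneg {q : ℝ} (hq : 0 < q) {x : ℝ} (hx : 0 ≤ x) : 0 ≤ qnum q x := by
  rcases lt_trichotomy q 1 with h | h | h
  · have h1 : q ^ (x / 2) ≤ q ^ (-x / 2) :=
      Real.rpow_le_rpow_of_exponent_ge hq h.le (by linarith)
    have h2 : q ^ ((1 : ℝ) / 2) ≤ q ^ (-(1 : ℝ) / 2) :=
      Real.rpow_le_rpow_of_exponent_ge hq h.le (by norm_num)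
    exact div_nonneg_of_nonpos (by linarith) (by linarith)
  · simp [qnum, h]
  · have h1 : q ^ (-x / 2) ≤ q ^ (x / 2) :=
      Real.rpow_le_rpow_of_exponent_le h.le (by linarith)
    have h2 : q ^ (-(1 : ℝ) / 2) ≤ q ^ ((1 : ℝ) / 2) :=
      Real.rpow_le_rpow_of_exponent_le h.le (by norm_num)
    exact div_nonneg (by linarith) (by linarith)

/-- subdiagonal matrix -/
def lmat (n : ℕ) (f : ℕ → ℝ) : Matrix (Fin (n + 1)) (Fin (n + 1)) ℝ :=
  Matrix.of fun i i' => if (i : ℕ) = (i' : ℕ) + 1 then f (i' : ℕ) else 0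

/-- superdiagonal matrix -/
def umat (n : ℕ) (g : ℕ → ℝ) : Matrix (Fin (n + 1)) (Fin (n + 1)) ℝ :=
  Matrix.of fun i i' => if (i : ℕ) + 1 = (i' : ℕ) then g (i' : ℕ) else 0

lemma lmat_mul_umat (n : ℕ) (f g : ℕ → ℝ) :
    lmat n f * umat n g
      = Matrix.diagonal (fun i : Fin (n+1) => if 1 ≤ (i : ℕ) then f ((i : ℕ) - 1) * g (i : ℕ) else 0) := by
  ext i k
  rw [Matrix.mul_apply]
  simp only [lmat, umat, Matrix.of_apply, ite_mul, zero_mul, mul_ite, mul_zero]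
  rcases eq_or_ne i k with rfl | hik
  · rw [Matrix.diagonal_apply_eq]
    by_cases h1 : 1 ≤ (i : ℕ)
    · rw [if_pos h1]
      rw [Finset.sum_eq_single (⟨(i : ℕ) - 1, lt_of_le_of_lt (Nat.sub_le _ _) i.isLt⟩ :
        Fin (n + 1))]
      · rw [if_pos (by simp; omega), if_pos (by simp; omega)]
      · intro j _ hj
        have hj' : (j : ℕ) ≠ (i : ℕ) - 1 := fun h => hj (Fin.ext (by simpa using h))
        split_ifs with h2 h3 <;> first | rfl | omega
      · intro h; exact absurd (Finset.mem_univ _) h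
    · rw [if_neg h1]
      apply Finset.sum_eq_zero
      intro j _
      split_ifs with h2 h3 <;> first | rfl | omega
  · rw [Matrix.diagonal_apply_ne _ hik]
    apply Finset.sum_eq_zero
    intro j _
    have hik' : (i : ℕ) ≠ (k : ℕ) := fun h => hik (Fin.ext h)
    split_ifs with h2 h3 <;> first | rfl | omega

lemma umat_mul_lmat (n : ℕ) (f g : ℕ → ℝ) :
    umat n g * lmat n f
      = Matrix.diagonal (fun i : Fin (n+1) => if (i : ℕ) + 1 ≤ n then g ((i : ℕ) + 1) * f (i : ℕ) else 0) := by
  ext i k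
  rw [Matrix.mul_apply]
  simp only [lmat, umat, Matrix.of_apply, ite_mul, zero_mul, mul_ite, mul_zero]
  rcases eq_or_ne i k with rfl | hik
  · rw [Matrix.diagonal_apply_eq]
    by_cases h1 : (i : ℕ) + 1 ≤ n
    · rw [if_pos h1]
      rw [Finset.sum_eq_single (⟨(i : ℕ) + 1, by omega⟩ : Fin (n + 1))]
      · rw [if_pos (by simp), if_pos (by simp)]
      · intro j _ hj
        have hj' : (j : ℕ) ≠ (i : ℕ) + 1 := fun h => hj (Fin.ext (by simpa using h))
        split_ifs with h2 h3 <;> first | rfl | omega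
      · intro h; exact absurd (Finset.mem_univ _) h
    · rw [if_neg h1]
      apply Finset.sum_eq_zero
      intro j _
      have hjn : (j : ℕ) ≤ n := Nat.lt_succ_iff.mp j.isLt
      split_ifs with h2 h3 <;> first | rfl | omega
  · rw [Matrix.diagonal_apply_ne _ hik]
    apply Finset.sum_eq_zero
    intro j _
    have hik' : (i : ℕ) ≠ (k : ℕ) := fun h => hik (Fin.ext h)
    split_ifs with h2 h3 <;> first | rfl | omega

lemma Jp_eq (q : ℝ) (n : ℕ) :
    Jpmat q n = lmat n (fun m => Real.sqrt (qnum q ((n : ℝ) - (m : ℝ)) * qnum q ((m : ℝ) + 1))) :=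
  rfl

lemma Jm_eq (q : ℝ) (n : ℕ) :
    Jmmat q n = umat n (fun m => Real.sqrt (qnum q ((m : ℝ)) * qnum q ((n : ℝ) - (m : ℝ) + 1))) :=
  rfl

lemma K_mul_lmat (q : ℝ) (n : ℕ) (f : ℕ → ℝ) :
    Kmat q n * lmat n f
      = lmat n (fun m => q ^ ((((m : ℝ) + 1) - (n : ℝ) / 2) / 2) * f m) := by
  ext i k
  simp only [Kmat, lmat, Matrix.diagonal_mul, Matrix.of_apply, mul_ite, mul_zero]
  split_ifs with h
  · have hc : ((i : ℕ) : ℝ) = ((k : ℕ) : ℝ) + 1 := by exact_mod_cast congrArg (Nat.cast (R := ℝ)) h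
    rw [mval, hc]
  · rfl

lemma K_mul_umat (q : ℝ) (n : ℕ) (g : ℕ → ℝ) :
    Kmat q n * umat n g
      = umat n (fun m => q ^ ((((m : ℝ) - 1) - (n : ℝ) / 2) / 2) * g m) := by
  ext i k
  simp only [Kmat, umat, Matrix.diagonal_mul, Matrix.of_apply, mul_ite, mul_zero]
  split_ifs with h
  · have hc : ((i : ℕ) : ℝ) = ((k : ℕ) : ℝ) - 1 := by
      have : ((i : ℕ) : ℝ) + 1 = ((k : ℕ) : ℝ) := by exact_mod_cast congrArg (Nat.cast (R := ℝ)) h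
      linarith
    rw [mval, hc]
  · rfl

lemma JpJm_eq {q : ℝ} (hq : 0 < q) (n : ℕ) :
    Jpmat q n * Jmmat q n
      = Matrix.diagonal (fun i : Fin (n+1) =>
          qnum q ((i : ℕ) : ℝ) * qnum q ((n : ℝ) - ((i : ℕ) : ℝ) + 1)) := by
  rw [Jp_eq, Jm_eq, lmat_mul_umat]
  refine congrArg Matrix.diagonal (funext fun i => ?_)
  have hin : ((i : ℕ) : ℝ) ≤ (n : ℝ) := by exact_mod_cast Fin.is_le i
  by_cases h1 : 1 ≤ (i : ℕ)
  · rw [if_pos h1]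
    have e1 : (((i : ℕ) - 1 : ℕ) : ℝ) = ((i : ℕ) : ℝ) - 1 := by
      push_cast [h1]; ring
    rw [e1, show (n : ℝ) - (((i : ℕ) : ℝ) - 1) = (n : ℝ) - ((i : ℕ) : ℝ) + 1 by ring,
      show ((i : ℕ) : ℝ) - 1 + 1 = ((i : ℕ) : ℝ) by ring,
      mul_comm (qnum q ((n : ℝ) - ((i : ℕ) : ℝ) + 1))]
    exact Real.mul_self_sqrt (mul_nonneg (qnum_nonneg hq (by positivity))
      (qnum_nonneg hq (by linarith)))
  · have h0 : (i : ℕ) = 0 := by omega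
    rw [if_neg h1, h0]
    simp [qnum_zero]

lemma JmJp_eq {q : ℝ} (hq : 0 < q) (n : ℕ) :
    Jmmat q n * Jpmat q n
      = Matrix.diagonal (fun i : Fin (n+1) =>
          qnum q (((i : ℕ) : ℝ) + 1) * qnum q ((n : ℝ) - ((i : ℕ) : ℝ))) := by
  rw [Jp_eq, Jm_eq, umat_mul_lmat]
  refine congrArg Matrix.diagonal (funext fun i => ?_)
  have hin : ((i : ℕ) : ℝ) ≤ (n : ℝ) := by exact_mod_cast Fin.is_le i
  by_cases h1 : (i : ℕ) + 1 ≤ n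
  · rw [if_pos h1]
    have h1' : ((i : ℕ) : ℝ) + 1 ≤ (n : ℝ) := by exact_mod_cast h1
    have e1 : (((i : ℕ) + 1 : ℕ) : ℝ) = ((i : ℕ) : ℝ) + 1 := by push_cast; ring
    rw [e1, show (n : ℝ) - (((i : ℕ) : ℝ) + 1) + 1 = (n : ℝ) - ((i : ℕ) : ℝ) by ring,
      mul_comm (qnum q ((n : ℝ) - ((i : ℕ) : ℝ)))]
    exact Real.mul_self_sqrt (mul_nonneg (qnum_nonneg hq (by positivity))
      (qnum_nonneg hq (by linarith)))
  · have h0 : (i : ℕ) = n := by have := Nat.lt_succ_iff.mp i.isLt; omega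
    rw [if_neg h1, h0]
    rw [show (n : ℝ) - ((n : ℕ) : ℝ) = 0 by ring]
    simp [qnum_zero]

lemma tOne_mul_tNegOne {q : ℝ} (hq : 0 < q) (n : ℕ) :
    tOne q n * tNegOne q n
      = Matrix.diagonal (fun i : Fin (n+1) =>
          -(q ^ (((i : ℕ) : ℝ) - (n : ℝ) / 2 - 1 / 2) *
            (qnum q ((i : ℕ) : ℝ) * qnum q ((n : ℝ) - ((i : ℕ) : ℝ) + 1)))) := by
  rw [tOne, tNegOne, mul_neg, Jp_eq, Jm_eq, K_mul_lmat, K_mul_umat, lmat_mul_umat,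
    Matrix.diagonal_neg]
  refine congrArg Matrix.diagonal (funext fun i => ?_)
  have hin : ((i : ℕ) : ℝ) ≤ (n : ℝ) := by exact_mod_cast Fin.is_le i
  by_cases h1 : 1 ≤ (i : ℕ)
  · rw [if_pos h1, neg_inj]
    have e1 : (((i : ℕ) - 1 : ℕ) : ℝ) = ((i : ℕ) : ℝ) - 1 := by push_cast [h1]; ring
    rw [e1]
    have hpow : q ^ ((((i : ℕ) : ℝ) - 1 + 1 - (n : ℝ) / 2) / 2) *
        q ^ ((((i : ℕ) : ℝ) - 1 - (n : ℝ) / 2) / 2)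
        = q ^ (((i : ℕ) : ℝ) - (n : ℝ) / 2 - 1 / 2) := by
      rw [← Real.rpow_add hq]; congr 1; ring
    have hsqrt : Real.sqrt (qnum q ((n : ℝ) - (((i : ℕ) : ℝ) - 1)) *
          qnum q (((i : ℕ) : ℝ) - 1 + 1)) *
        Real.sqrt (qnum q ((i : ℕ) : ℝ) * qnum q ((n : ℝ) - ((i : ℕ) : ℝ) + 1))
        = qnum q ((i : ℕ) : ℝ) * qnum q ((n : ℝ) - ((i : ℕ) : ℝ) + 1) := by
      rw [show (n : ℝ) - (((i : ℕ) : ℝ) - 1) = (n : ℝ) - ((i : ℕ) : ℝ) + 1 by ring,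
        show ((i : ℕ) : ℝ) - 1 + 1 = ((i : ℕ) : ℝ) by ring,
        mul_comm (qnum q ((n : ℝ) - ((i : ℕ) : ℝ) + 1))]
      exact Real.mul_self_sqrt (mul_nonneg (qnum_nonneg hq (by positivity))
        (qnum_nonneg hq (by linarith)))
    calc q ^ ((((i : ℕ) : ℝ) - 1 + 1 - (n : ℝ) / 2) / 2) *
          Real.sqrt (qnum q ((n : ℝ) - (((i : ℕ) : ℝ) - 1)) *
            qnum q (((i : ℕ) : ℝ) - 1 + 1)) *
          (q ^ ((((i : ℕ) : ℝ) - 1 - (n : ℝ) / 2) / 2) *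
            Real.sqrt (qnum q ((i : ℕ) : ℝ) * qnum q ((n : ℝ) - ((i : ℕ) : ℝ) + 1)))
        = (q ^ ((((i : ℕ) : ℝ) - 1 + 1 - (n : ℝ) / 2) / 2) *
            q ^ ((((i : ℕ) : ℝ) - 1 - (n : ℝ) / 2) / 2)) *
          (Real.sqrt (qnum q ((n : ℝ) - (((i : ℕ) : ℝ) - 1)) *
              qnum q (((i : ℕ) : ℝ) - 1 + 1)) *
            Real.sqrt (qnum q ((i : ℕ) : ℝ) * qnum q ((n : ℝ) - ((i : ℕ) : ℝ) + 1))) := by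
          ring
      _ = q ^ (((i : ℕ) : ℝ) - (n : ℝ) / 2 - 1 / 2) *
            (qnum q ((i : ℕ) : ℝ) * qnum q ((n : ℝ) - ((i : ℕ) : ℝ) + 1)) := by
          rw [hpow, hsqrt]
  · have h0 : (i : ℕ) = 0 := by omega
    rw [if_neg h1, h0]
    simp [qnum_zero]

lemma tNegOne_mul_tOne {q : ℝ} (hq : 0 < q) (n : ℕ) :
    tNegOne q n * tOne q n
      = Matrix.diagonal (fun i : Fin (n+1) =>
          -(q ^ (((i : ℕ) : ℝ) - (n : ℝ) / 2 + 1 / 2) *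
            (qnum q (((i : ℕ) : ℝ) + 1) * qnum q ((n : ℝ) - ((i : ℕ) : ℝ))))) := by
  rw [tOne, tNegOne, neg_mul, Jp_eq, Jm_eq, K_mul_lmat, K_mul_umat, umat_mul_lmat,
    Matrix.diagonal_neg]
  refine congrArg Matrix.diagonal (funext fun i => ?_)
  have hin : ((i : ℕ) : ℝ) ≤ (n : ℝ) := by exact_mod_cast Fin.is_le i
  by_cases h1 : (i : ℕ) + 1 ≤ n
  · rw [if_pos h1, neg_inj]
    have h1' : ((i : ℕ) : ℝ) + 1 ≤ (n : ℝ) := by exact_mod_cast h1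
    have e1 : (((i : ℕ) + 1 : ℕ) : ℝ) = ((i : ℕ) : ℝ) + 1 := by push_cast; ring
    rw [e1]
    have hpow : q ^ ((((i : ℕ) : ℝ) + 1 - 1 - (n : ℝ) / 2) / 2) *
        q ^ ((((i : ℕ) : ℝ) + 1 - (n : ℝ) / 2) / 2)
        = q ^ (((i : ℕ) : ℝ) - (n : ℝ) / 2 + 1 / 2) := by
      rw [← Real.rpow_add hq]; congr 1; ring
    have hsqrt : Real.sqrt (qnum q (((i : ℕ) : ℝ) + 1) *
          qnum q ((n : ℝ) - (((i : ℕ) : ℝ) + 1) + 1)) *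
        Real.sqrt (qnum q ((n : ℝ) - ((i : ℕ) : ℝ)) * qnum q (((i : ℕ) : ℝ) + 1))
        = qnum q (((i : ℕ) : ℝ) + 1) * qnum q ((n : ℝ) - ((i : ℕ) : ℝ)) := by
      rw [show (n : ℝ) - (((i : ℕ) : ℝ) + 1) + 1 = (n : ℝ) - ((i : ℕ) : ℝ) by ring,
        mul_comm (qnum q ((n : ℝ) - ((i : ℕ) : ℝ)))]
      exact Real.mul_self_sqrt (mul_nonneg (qnum_nonneg hq (by positivity))
        (qnum_nonneg hq (by linarith)))
    calc q ^ ((((i : ℕ) : ℝ) + 1 - 1 - (n : ℝ) / 2) / 2) *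
          Real.sqrt (qnum q (((i : ℕ) : ℝ) + 1) *
            qnum q ((n : ℝ) - (((i : ℕ) : ℝ) + 1) + 1)) *
          (q ^ ((((i : ℕ) : ℝ) + 1 - (n : ℝ) / 2) / 2) *
            Real.sqrt (qnum q ((n : ℝ) - ((i : ℕ) : ℝ)) * qnum q (((i : ℕ) : ℝ) + 1)))
        = (q ^ ((((i : ℕ) : ℝ) + 1 - 1 - (n : ℝ) / 2) / 2) *
            q ^ ((((i : ℕ) : ℝ) + 1 - (n : ℝ) / 2) / 2)) *
          (Real.sqrt (qnum q (((i : ℕ) : ℝ) + 1) *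
              qnum q ((n : ℝ) - (((i : ℕ) : ℝ) + 1) + 1)) *
            Real.sqrt (qnum q ((n : ℝ) - ((i : ℕ) : ℝ)) * qnum q (((i : ℕ) : ℝ) + 1))) := by
          ring
      _ = q ^ (((i : ℕ) : ℝ) - (n : ℝ) / 2 + 1 / 2) *
            (qnum q (((i : ℕ) : ℝ) + 1) * qnum q ((n : ℝ) - ((i : ℕ) : ℝ))) := by
          rw [hpow, hsqrt]
  · have h0 : (i : ℕ) = n := by have := Nat.lt_succ_iff.mp i.isLt; omega
    rw [if_neg h1, h0, show (n : ℝ) - ((n : ℕ) : ℝ) = 0 by ring]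
    simp [qnum_zero]

lemma tZero_diag {q : ℝ} (hq : 0 < q) (n : ℕ) :
    tZero q n
      = Matrix.diagonal (fun i : Fin (n+1) =>
          -((Real.sqrt (qnum q 2))⁻¹ *
            (q ^ (-(1 : ℝ) / 2) *
                (qnum q ((i : ℕ) : ℝ) * qnum q ((n : ℝ) - ((i : ℕ) : ℝ) + 1)) -
              q ^ ((1 : ℝ) / 2) *
                (qnum q (((i : ℕ) : ℝ) + 1) * qnum q ((n : ℝ) - ((i : ℕ) : ℝ)))))) := by
  rw [tZero, JpJm_eq hq, JmJp_eq hq]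
  ext i k
  rcases eq_or_ne i k with rfl | hik
  · simp only [Matrix.neg_apply, Matrix.smul_apply, Matrix.sub_apply,
      Matrix.diagonal_apply_eq, smul_eq_mul]
  · simp [Matrix.diagonal_apply_ne _ hik, hik]


set_option maxHeartbeats 2000000 in
lemma key {q : ℝ} (hq : 0 < q) (hq1 : q ≠ 1) (n x : ℕ) (hxn : ((x : ℕ) : ℝ) ≤ (n : ℝ)) :
    q ^ ((1 : ℝ) / 2) *
        (-(q ^ ((x : ℝ) - (n : ℝ) / 2 - 1 / 2) *
          (qnum q (x : ℝ) * qnum q ((n : ℝ) - (x : ℝ) + 1))))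
      - (-((Real.sqrt (qnum q 2))⁻¹ *
            (q ^ (-(1 : ℝ) / 2) * (qnum q (x : ℝ) * qnum q ((n : ℝ) - (x : ℝ) + 1)) -
              q ^ ((1 : ℝ) / 2) * (qnum q ((x : ℝ) + 1) * qnum q ((n : ℝ) - (x : ℝ)))))) *
        (-((Real.sqrt (qnum q 2))⁻¹ *
            (q ^ (-(1 : ℝ) / 2) * (qnum q (x : ℝ) * qnum q ((n : ℝ) - (x : ℝ) + 1)) -
              q ^ ((1 : ℝ) / 2) * (qnum q ((x : ℝ) + 1) * qnum q ((n : ℝ) - (x : ℝ))))))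
      + q ^ (-(1 : ℝ) / 2) *
        (-(q ^ ((x : ℝ) - (n : ℝ) / 2 + 1 / 2) *
          (qnum q ((x : ℝ) + 1) * qnum q ((n : ℝ) - (x : ℝ)))))
    = -(qnum q (n : ℝ) * qnum q ((n : ℝ) + 2) / qnum q 2) := by
  have hpow : ∀ y z : ℝ, q ^ (y + z) = q ^ y * q ^ z := fun y z => Real.rpow_add hq y z
  have hneg : ∀ a : ℝ, q ^ (-a) = (q ^ a)⁻¹ := fun a => Real.rpow_neg hq.le a
  have h2nn : 0 ≤ qnum q 2 := qnum_nonneg hq (by norm_num)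
  have hu : q ^ ((x : ℝ) / 2) ≠ 0 := (Real.rpow_pos_of_pos hq _).ne'
  have hv : q ^ ((n : ℝ) / 2) ≠ 0 := (Real.rpow_pos_of_pos hq _).ne'
  have hc : q ^ ((1 : ℝ) / 2) ≠ 0 := (Real.rpow_pos_of_pos hq _).ne'
  have hcc : q ^ ((1 : ℝ) / 2) * q ^ ((1 : ℝ) / 2) = q := by
    rw [← hpow, show (1 : ℝ) / 2 + (1 : ℝ) / 2 = 1 by norm_num, Real.rpow_one]
  have hccm1 : q ^ ((1 : ℝ) / 2) * q ^ ((1 : ℝ) / 2) - 1 ≠ 0 := by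
    rw [hcc]; exact sub_ne_zero.mpr hq1
  have hc21 : q ^ ((1 : ℝ) / 2) * q ^ ((1 : ℝ) / 2) + 1 ≠ 0 := by positivity
  have hD : q ^ ((1 : ℝ) / 2) - (q ^ ((1 : ℝ) / 2))⁻¹ ≠ 0 := by
    intro h
    apply hccm1
    have h' := congrArg (fun t => q ^ ((1 : ℝ) / 2) * t) h
    simp only [mul_sub, mul_inv_cancel₀ hc, mul_zero] at h'
    linarith
  -- kill the sqrt
  have hsq : ∀ E : ℝ,
      (-((Real.sqrt (qnum q 2))⁻¹ * E)) * (-((Real.sqrt (qnum q 2))⁻¹ * E))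
        = (qnum q 2)⁻¹ * (E * E) := by
    intro E
    have h : (Real.sqrt (qnum q 2))⁻¹ * (Real.sqrt (qnum q 2))⁻¹ = (qnum q 2)⁻¹ := by
      rw [← mul_inv, Real.mul_self_sqrt h2nn]
    calc (-((Real.sqrt (qnum q 2))⁻¹ * E)) * (-((Real.sqrt (qnum q 2))⁻¹ * E))
        = ((Real.sqrt (qnum q 2))⁻¹ * (Real.sqrt (qnum q 2))⁻¹) * (E * E) := by ring
      _ = (qnum q 2)⁻¹ * (E * E) := by rw [h]
  rw [hsq]
  -- generic qnum expansion
  have hq2 : ∀ y : ℝ, qnum q y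
      = (q ^ (y / 2) - (q ^ (y / 2))⁻¹) / (q ^ ((1 : ℝ) / 2) - (q ^ ((1 : ℝ) / 2))⁻¹) := by
    intro y
    rw [qnum, show -y / 2 = -(y / 2) by ring, hneg, show -(1 : ℝ) / 2 = -((1 : ℝ) / 2) by ring,
      hneg]
  have Hcinv : q ^ (-(1 : ℝ) / 2) = (q ^ ((1 : ℝ) / 2))⁻¹ := by
    rw [show -(1 : ℝ) / 2 = -((1 : ℝ) / 2) by ring, hneg]
  have HA : q ^ ((x : ℝ) - (n : ℝ) / 2 - 1 / 2)
      = q ^ ((x : ℝ) / 2) * q ^ ((x : ℝ) / 2) / (q ^ ((n : ℝ) / 2) * q ^ ((1 : ℝ) / 2)) := by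
    rw [show (x : ℝ) - (n : ℝ) / 2 - 1 / 2
        = ((x : ℝ) / 2 + (x : ℝ) / 2) + (-((n : ℝ) / 2) + -((1 : ℝ) / 2)) by ring,
      hpow, hpow, hpow, hneg, hneg]
    field_simp
  have HB : q ^ ((x : ℝ) - (n : ℝ) / 2 + 1 / 2)
      = q ^ ((x : ℝ) / 2) * q ^ ((x : ℝ) / 2) * q ^ ((1 : ℝ) / 2) / q ^ ((n : ℝ) / 2) := by
    rw [show (x : ℝ) - (n : ℝ) / 2 + 1 / 2
        = ((x : ℝ) / 2 + (x : ℝ) / 2) + (-((n : ℝ) / 2) + (1 : ℝ) / 2) by ring,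
      hpow, hpow, hpow, hneg]
    field_simp
  have Hx : qnum q (x : ℝ)
      = q ^ ((1 : ℝ) / 2) * (q ^ ((x : ℝ) / 2) * q ^ ((x : ℝ) / 2) - 1) /
        (q ^ ((x : ℝ) / 2) * (q ^ ((1 : ℝ) / 2) * q ^ ((1 : ℝ) / 2) - 1)) := by
    rw [hq2]
    field_simp
  have Hn : qnum q (n : ℝ)
      = q ^ ((1 : ℝ) / 2) * (q ^ ((n : ℝ) / 2) * q ^ ((n : ℝ) / 2) - 1) /
        (q ^ ((n : ℝ) / 2) * (q ^ ((1 : ℝ) / 2) * q ^ ((1 : ℝ) / 2) - 1)) := by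
    rw [hq2]
    field_simp
  have Hnx1 : qnum q ((n : ℝ) - (x : ℝ) + 1)
      = (q ^ ((n : ℝ) / 2) * q ^ ((n : ℝ) / 2) * (q ^ ((1 : ℝ) / 2) * q ^ ((1 : ℝ) / 2)) -
          q ^ ((x : ℝ) / 2) * q ^ ((x : ℝ) / 2)) /
        (q ^ ((x : ℝ) / 2) * q ^ ((n : ℝ) / 2) *
          (q ^ ((1 : ℝ) / 2) * q ^ ((1 : ℝ) / 2) - 1)) := by
    rw [hq2, show ((n : ℝ) - (x : ℝ) + 1) / 2
        = (n : ℝ) / 2 + (-((x : ℝ) / 2) + (1 : ℝ) / 2) by ring, hpow, hpow, hneg]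
    field_simp
  have Hx1 : qnum q ((x : ℝ) + 1)
      = (q ^ ((x : ℝ) / 2) * q ^ ((x : ℝ) / 2) * (q ^ ((1 : ℝ) / 2) * q ^ ((1 : ℝ) / 2)) - 1) /
        (q ^ ((x : ℝ) / 2) * (q ^ ((1 : ℝ) / 2) * q ^ ((1 : ℝ) / 2) - 1)) := by
    rw [hq2, show ((x : ℝ) + 1) / 2 = (x : ℝ) / 2 + (1 : ℝ) / 2 by ring, hpow]
    field_simp
  have Hnx : qnum q ((n : ℝ) - (x : ℝ))
      = q ^ ((1 : ℝ) / 2) *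
          (q ^ ((n : ℝ) / 2) * q ^ ((n : ℝ) / 2) - q ^ ((x : ℝ) / 2) * q ^ ((x : ℝ) / 2)) /
        (q ^ ((x : ℝ) / 2) * q ^ ((n : ℝ) / 2) *
          (q ^ ((1 : ℝ) / 2) * q ^ ((1 : ℝ) / 2) - 1)) := by
    rw [hq2, show ((n : ℝ) - (x : ℝ)) / 2 = (n : ℝ) / 2 + -((x : ℝ) / 2) by ring, hpow, hneg]
    field_simp
  have Hn2 : qnum q ((n : ℝ) + 2)
      = (q ^ ((n : ℝ) / 2) * q ^ ((n : ℝ) / 2) *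
            (q ^ ((1 : ℝ) / 2) * q ^ ((1 : ℝ) / 2) * (q ^ ((1 : ℝ) / 2) * q ^ ((1 : ℝ) / 2))) -
          1) /
        (q ^ ((n : ℝ) / 2) * q ^ ((1 : ℝ) / 2) *
          (q ^ ((1 : ℝ) / 2) * q ^ ((1 : ℝ) / 2) - 1)) := by
    rw [hq2, show ((n : ℝ) + 2) / 2 = (n : ℝ) / 2 + ((1 : ℝ) / 2 + (1 : ℝ) / 2) by ring,
      hpow, hpow]
    field_simp
  have H2 : qnum q 2
      = (q ^ ((1 : ℝ) / 2) * q ^ ((1 : ℝ) / 2) + 1) / q ^ ((1 : ℝ) / 2) := by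
    rw [hq2, show (2 : ℝ) / 2 = (1 : ℝ) / 2 + (1 : ℝ) / 2 by norm_num, hpow]
    have hsq2 : (q ^ ((1 : ℝ) / 2)) ^ 2 - 1 ≠ 0 := by rw [sq]; exact hccm1
    field_simp
    ring
  rw [H2, Hnx1, Hx1, Hnx, Hn2, Hx, Hn, HA, HB, Hcinv]
  have hsq2 : (q ^ ((1 : ℝ) / 2)) ^ 2 - 1 ≠ 0 := by rw [sq]; exact hccm1
  have hsq3 : (q ^ ((1 : ℝ) / 2)) ^ 2 + 1 ≠ 0 := by rw [sq]; exact hc21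
  field_simp
  ring


end T11

theorem t_squared_norm (q : ℝ) (hq : 0 < q) (hq1 : q ≠ 1) (n : ℕ) :
    -- Σ_{m = −1,0,1} (−1)^{1−m} q^{m/2} t_m t_{−m} = −([2j][2j+2]/[2]) · Id, with 2j = n
    q ^ ((1 : ℝ) / 2) • (tOne q n * tNegOne q n)
      - tZero q n * tZero q n
      + q ^ (-(1 : ℝ) / 2) • (tNegOne q n * tOne q n)
    = (-(qnum q (n : ℝ) * qnum q ((n : ℝ) + 2) / qnum q 2)) • (1 : Matrix (Fin (n + 1)) (Fin (n + 1)) ℝ) := by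
  ext i k
  rcases eq_or_ne i k with rfl | hik
  · rw [Matrix.add_apply, Matrix.sub_apply, Matrix.smul_apply, Matrix.smul_apply,
      Matrix.smul_apply, T11.tOne_mul_tNegOne hq, T11.tNegOne_mul_tOne hq, T11.tZero_diag hq,
      Matrix.diagonal_mul_diagonal]
    simp only [Matrix.diagonal_apply_eq, Matrix.one_apply_eq, smul_eq_mul, mul_one,
      Pi.mul_apply]
    exact T11.key hq hq1 n i (by exact_mod_cast Fin.is_le i)
  · simp [T11.tOne_mul_tNegOne hq, T11.tNegOne_mul_tOne hq, T11.tZero_diag hq,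
      Matrix.diagonal_mul_diagonal, Matrix.diagonal_apply_ne _ hik, Matrix.one_apply_ne hik]

end
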